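/- Let p be a prime and let C ∈ F̄_p[[X]] be an algebraic power series (algebraic over the field of rational functions). Then the dimension κ(τ(C)) of the p-kernel of the shifted series τ(C) satisfies κ(τ(C)) ≤ 2·κ(C), and conversely κ(C) ≤ 1 + 2·κ(τ(C)). -/

import Mathlib

open PowerSeries

/-- The shift operator `τ(Σ αₙXⁿ) = Σ α_{n+1}Xⁿ`. -/
noncomputable def shift {K : Type*} [Field K] (A : PowerSeries K) : PowerSeries K :=
  PowerSeries.mk fun n => coeff (n + 1) A

/-- The `p`-kernel of `C = Σ γₙXⁿ`: the span of `C` together with all the series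
`C_{k,f} = Σ_{n≥0} γ_{k+np^f} Xⁿ` for `f ≥ 1` and `0 ≤ k < p^f`. -/
noncomputable def pKernel {K : Type*} [Field K] (p : ℕ) (C : PowerSeries K) :
    Submodule K (PowerSeries K) :=
  Submodule.span K ({C} ∪
    {D | ∃ f k : ℕ, 1 ≤ f ∧ k < p ^ f ∧
      D = PowerSeries.mk fun n => coeff (k + n * p ^ f) C})

/-- `κ(C)`: the dimension of the `p`-kernel of `C`. -/
noncomputable def kappa {K : Type*} [Field K] (p : ℕ) (C : PowerSeries K) : ℕ :=
  Module.finrank K ↥(pKernel p C)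

section Aux

variable {K : Type*} [Field K]

/-- The shift operator as a linear map. -/
noncomputable def shiftL (K : Type*) [Field K] : PowerSeries K →ₗ[K] PowerSeries K where
  toFun := shift
  map_add' A B := by ext n; simp [shift]
  map_smul' c A := by ext n; simp [shift]

@[simp] lemma coeff_shift (A : PowerSeries K) (n : ℕ) :
    coeff n (shift A) = coeff (n + 1) A := by simp [shift]

/-- Multiplication by `X` as a linear map. -/
noncomputable def mulXL (K : Type*) [Field K] : PowerSeries K →ₗ[K] PowerSeries K :=
  LinearMap.mulLeft K (X : PowerSeries K)

lemma eq_C0_smul_one_add_X_mul_shift (A : PowerSeries K) :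
    A = (coeff 0 A) • (1 : PowerSeries K) + X * shift A := by
  ext n
  cases n with
  | zero => simp
  | succ n => simp [PowerSeries.coeff_succ_X_mul, PowerSeries.coeff_one]

lemma mem_pKernel_self (p : ℕ) (C : PowerSeries K) : C ∈ pKernel p C :=
  Submodule.subset_span (Or.inl rfl)

lemma mem_pKernel_section (p : ℕ) (C : PowerSeries K) {f k : ℕ} (hf : 1 ≤ f)
    (hk : k < p ^ f) :
    (PowerSeries.mk fun n => coeff (k + n * p ^ f) C) ∈ pKernel p C :=
  Submodule.subset_span (Or.inr ⟨f, k, hf, hk, rfl⟩)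

lemma pKernel_shift_le (p : ℕ) (hp : 0 < p) (C : PowerSeries K) :
    pKernel p (shift C) ≤ pKernel p C ⊔ (pKernel p C).map (shiftL K) := by
  rw [pKernel, Submodule.span_le]
  rintro D (rfl | ⟨f, k, hf, hk, rfl⟩)
  · exact Submodule.mem_sup_right ⟨C, mem_pKernel_self p C, rfl⟩
  · rcases lt_or_eq_of_le (Nat.succ_le_of_lt hk) with h | h
    · -- k + 1 < p ^ f : this is the section C_{k+1, f}
      refine Submodule.mem_sup_left ?_
      have : (PowerSeries.mk fun n => coeff (k + n * p ^ f) (shift C)) =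
          PowerSeries.mk fun n => coeff ((k + 1) + n * p ^ f) C := by
        ext n; simp [coeff_shift]; ring_nf
      rw [this]
      exact mem_pKernel_section p C hf h
    · -- k + 1 = p ^ f : this is shift of the section C_{0, f}
      refine Submodule.mem_sup_right ?_
      refine ⟨PowerSeries.mk fun n => coeff (0 + n * p ^ f) C,
        mem_pKernel_section p C hf (pow_pos hp f), ?_⟩
      ext n
      simp only [shiftL, LinearMap.coe_mk, AddHom.coe_mk, coeff_shift, coeff_mk]
      congr 1
      rw [zero_add, add_mul, one_mul]
      generalize hq : p ^ f = q at h ⊢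
      generalize n * q = m
      congr 1
      omega


lemma pKernel_le_shift_aux (p : ℕ) (hp : 0 < p) (A : PowerSeries K) :
    pKernel p A ≤ (Submodule.span K {(1 : PowerSeries K)} ⊔ pKernel p (shift A)) ⊔
      (pKernel p (shift A)).map (mulXL K) := by
  rw [pKernel, Submodule.span_le]
  rintro D (hD | ⟨f, k, hf, hk, rfl⟩)
  · rw [Set.mem_singleton_iff] at hD
    rw [SetLike.mem_coe, hD]
    suffices h : (coeff 0 A) • (1 : PowerSeries K) + X * shift A ∈
        (Submodule.span K {(1 : PowerSeries K)} ⊔ pKernel p (shift A)) ⊔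
          (pKernel p (shift A)).map (mulXL K) by
      rwa [← eq_C0_smul_one_add_X_mul_shift A] at h
    refine Submodule.add_mem _ ?_ ?_
    · exact Submodule.mem_sup_left (Submodule.mem_sup_left
        (Submodule.smul_mem _ _ (Submodule.subset_span rfl)))
    · exact Submodule.mem_sup_right ⟨shift A, mem_pKernel_self p (shift A), rfl⟩
  · rcases Nat.eq_zero_or_pos k with rfl | hk1
    · -- k = 0
      have hE : (PowerSeries.mk fun n => coeff ((p ^ f - 1) + n * p ^ f) (shift A)) ∈
          pKernel p (shift A) :=
        mem_pKernel_section p (shift A) hf (Nat.sub_lt (pow_pos hp f) one_pos)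
      have hD : (PowerSeries.mk fun n => coeff (0 + n * p ^ f) A) =
          (coeff 0 A) • (1 : PowerSeries K) +
            X * (PowerSeries.mk fun n => coeff ((p ^ f - 1) + n * p ^ f) (shift A)) := by
        ext n
        cases n with
        | zero => simp
        | succ n =>
          rw [map_add, PowerSeries.coeff_succ_X_mul]
          have h1 : coeff (n + 1) ((coeff 0 A) • (1 : PowerSeries K)) = 0 := by
            simp [PowerSeries.coeff_one]
          rw [h1, zero_add, coeff_mk, coeff_mk, coeff_shift]
          congr 2
          have hq : 1 ≤ p ^ f := Nat.one_le_iff_ne_zero.mpr (pow_pos hp f).ne'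
          generalize p ^ f = q at hq ⊢
          rw [zero_add, add_mul, one_mul]
          generalize n * q = m
          omega
      rw [hD]
      refine Submodule.add_mem _ ?_ ?_
      · exact Submodule.mem_sup_left (Submodule.mem_sup_left
          (Submodule.smul_mem _ _ (Submodule.subset_span rfl)))
      · exact Submodule.mem_sup_right ⟨_, hE, rfl⟩
    · -- k ≥ 1
      have hD : (PowerSeries.mk fun n => coeff (k + n * p ^ f) A) =
          PowerSeries.mk fun n => coeff ((k - 1) + n * p ^ f) (shift A) := by
        ext n
        rw [coeff_mk, coeff_mk, coeff_shift]
        congr 2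
        generalize n * p ^ f = m
        omega
      rw [hD]
      exact Submodule.mem_sup_left (Submodule.mem_sup_right
        (mem_pKernel_section p (shift A) hf (by omega)))

lemma kappa_shift_le_aux (p : ℕ) (hp : 0 < p) (C : PowerSeries K) :
    kappa p (shift C) ≤ 2 * kappa p C ∧ kappa p C ≤ 1 + 2 * kappa p (shift C) := by
  have hA := pKernel_shift_le p hp C
  have hB := pKernel_le_shift_aux p hp C
  by_cases hS : FiniteDimensional K (pKernel p C)
  · haveI := hS
    haveI : Module.Finite K ((pKernel p C).map (shiftL K)) :=
      Module.Finite.map _ _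
    haveI : FiniteDimensional K (pKernel p (shift C)) :=
      Submodule.finiteDimensional_of_le hA
    haveI : Module.Finite K ((pKernel p (shift C)).map (mulXL K)) :=
      Module.Finite.map _ _
    constructor
    · calc kappa p (shift C)
          ≤ Module.finrank K ↥(pKernel p C ⊔ (pKernel p C).map (shiftL K)) :=
            Submodule.finrank_mono hA
        _ ≤ Module.finrank K ↥(pKernel p C) +
              Module.finrank K ↥((pKernel p C).map (shiftL K)) :=
            Submodule.finrank_add_le_finrank_add_finrank _ _
        _ ≤ kappa p C + kappa p C := by
            exact Nat.add_le_add le_rfl (Submodule.finrank_map_le _ _)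
        _ = 2 * kappa p C := by ring
    · have hone : Module.finrank K ↥(Submodule.span K {(1 : PowerSeries K)}) = 1 :=
        finrank_span_singleton one_ne_zero
      calc kappa p C
          ≤ Module.finrank K ↥((Submodule.span K {(1 : PowerSeries K)} ⊔
              pKernel p (shift C)) ⊔ (pKernel p (shift C)).map (mulXL K)) :=
            Submodule.finrank_mono hB
        _ ≤ Module.finrank K ↥(Submodule.span K {(1 : PowerSeries K)} ⊔
              pKernel p (shift C)) +
              Module.finrank K ↥((pKernel p (shift C)).map (mulXL K)) :=
            Submodule.finrank_add_le_finrank_add_finrank _ _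
        _ ≤ (Module.finrank K ↥(Submodule.span K {(1 : PowerSeries K)}) +
              Module.finrank K ↥(pKernel p (shift C))) +
              Module.finrank K ↥((pKernel p (shift C)).map (mulXL K)) :=
            Nat.add_le_add (Submodule.finrank_add_le_finrank_add_finrank _ _) le_rfl
        _ ≤ (1 + kappa p (shift C)) + kappa p (shift C) := by
            rw [hone]
            exact Nat.add_le_add le_rfl (Submodule.finrank_map_le _ _)
        _ = 1 + 2 * kappa p (shift C) := by ring
  · have hS' : ¬ FiniteDimensional K (pKernel p (shift C)) := by
      intro h
      haveI := h
      haveI : Module.Finite K ((pKernel p (shift C)).map (mulXL K)) :=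
        Module.Finite.map _ _
      exact hS (Submodule.finiteDimensional_of_le hB)
    unfold kappa
    rw [Module.finrank_of_infinite_dimensional hS,
      Module.finrank_of_infinite_dimensional hS']
    simp

end Aux

theorem kappa_shift_le (p : ℕ) [Fact p.Prime]
    (C : PowerSeries (AlgebraicClosure (ZMod p)))
    (hC : IsAlgebraic (Polynomial (AlgebraicClosure (ZMod p))) C) :
    kappa p (shift C) ≤ 2 * kappa p C ∧ kappa p C ≤ 1 + 2 * kappa p (shift C) :=
  kappa_shift_le_aux p (Fact.out : p.Prime).pos C
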